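/- For the Require macro semantics 'T1.p Require T2.q', interpreted as: for every instance c1 of T1, there exists exactly one instance c2 of T2 such that every interaction containing c1.p contains c2.q and no other instance's q-port — prove this is equivalent to: every interaction a in the configuration containing a port c1.p (for any instance c1 of T1) contains exactly one port of type T2.q. -/
import Mathlib


universe u

/-- Port instances for two component types: each instance `c : I1` of type `T1` has a
port `c.p` and each instance `c : I2` of type `T2` has a port `c.q`. -/
inductive RPort (I1 I2 : Type u) : Type u
  | p : I1 → RPort I1 I2
  | q : I2 → RPort I1 I2

/-- Semantics of the Require macro `T1.p Require T2.q`, i.e., of the FOIL formula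
`∀c1:T1. ∃c2:T2. ∀c3:T2 (c3 ≠ c2). (c1.p ⇒ c2.q ∧ ¬c3.q)` — interpreted pointwise
over the interactions of the configuration `γ`, with the existential choice of `c2`
allowed to depend on the interaction: a configuration `γ` satisfies it iff every
interaction of `γ` containing a port `c1.p` (for some instance `c1` of `T1`)
contains exactly one port of type `T2.q`. -/
theorem require_macro_characterization {I1 I2 : Type u} [Finite I1] [Finite I2]
    [Nonempty I2] (γ : Set (Set (RPort I1 I2)))
    (hγ : γ.Nonempty) (hne : ∀ a ∈ γ, a.Nonempty) :
    (∀ a ∈ γ, ∀ c1 : I1, ∃ c2 : I2,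
        (RPort.p c1 ∈ a → RPort.q c2 ∈ a) ∧
        ∀ c3 : I2, c3 ≠ c2 → (RPort.p c1 ∈ a → RPort.q c3 ∉ a)) ↔
      ∀ a ∈ γ, (∃ c1 : I1, RPort.p c1 ∈ a) →
        ∃! c2 : I2, RPort.q c2 ∈ a := by
  constructor
  · rintro h a ha ⟨c1, hp⟩
    obtain ⟨c2, h1, h2⟩ := h a ha c1
    exact ⟨c2, h1 hp, fun c3 hq => by
      by_contra hne'
      exact h2 c3 hne' hp hq⟩
  · intro h a ha c1
    by_cases hp : RPort.p c1 ∈ a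
    · obtain ⟨c2, hq, hu⟩ := h a ha ⟨c1, hp⟩
      exact ⟨c2, fun _ => hq, fun c3 hne' _ hq3 => hne' (hu c3 hq3)⟩
    · exact ⟨Classical.arbitrary I2, fun h' => absurd h' hp,
        fun c3 _ h' => absurd h' hp⟩
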